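/- Let d ≥ 1 be an integer and P ⊆ ℤ. Then P is topologically intersective of order d if and only if P is a Birkhoff recurrence set of order d, where P is topologically intersective of order d means: for every syndetic set F ⊆ ℤ there exist n_1,…,n_d ∈ ℤ with FS({n_i}_{i=1}^d) ⊆ P and an a ∈ F with a + FS({n_i}_{i=1}^d) ⊆ F (equivalently, F ∩ ⋂_{n ∈ FS({n_i}_{i=1}^d)} (F − n) ≠ ∅). -/

import Mathlib

open scoped Classical
open MeasureTheory Filter Topology

noncomputable section

/-- Integer iterate of a bijection `T` of a set: `zIter T n = T^n`. -/
def zIter {X : Type*} (T : Equiv.Perm X) (n : ℤ) : X → X := ⇑(T ^ n)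

/-- Integer iterate of a homeomorphism. -/
def hIter {X : Type*} [TopologicalSpace X] (T : X ≃ₜ X) (n : ℤ) : X → X :=
  zIter T.toEquiv n

/-- The integer nearest to `a`, with ties broken towards the smaller integer.
This is the `⌈·⌉` of the paper. -/
def nearInt (a : ℝ) : ℤ := if a - (⌊a⌋ : ℝ) ≤ 1/2 then ⌊a⌋ else ⌈a⌉

/-- The distance from `a` to the nearest integer, i.e. `‖a‖` in the paper. -/
def distInt (a : ℝ) : ℝ := |a - (nearInt a : ℝ)|

/-- Generalized polynomials of degree at most `d` (for `d ≥ 1`):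
`GP 1` is the smallest collection of functions `ℤ → ℝ` containing `n ↦ a n`
and closed under taking the nearest integer, scalar multiplication and finite sums;
`GP d` moreover contains every `GP e` for `e < d` and all functions
`n ↦ a₀ n^{p₀} ⌈f₁(n)⌉ ⋯ ⌈f k (n)⌉` with `f l ∈ GP (p l)` and `p₀ + ∑ p l = d`. -/
inductive GP : ℕ → (ℤ → ℝ) → Prop
  | lin (a : ℝ) : GP 1 (fun n => a * n)
  | mono {d : ℕ} (hd : 1 ≤ d) (a₀ : ℝ) (p₀ : ℕ) {k : ℕ} (p : Fin k → ℕ)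
      (f : Fin k → ℤ → ℝ) (hf : ∀ l, GP (p l) (f l)) (hsum : p₀ + ∑ l, p l = d) :
      GP d (fun n => a₀ * (n : ℝ) ^ p₀ * ∏ l, (nearInt (f l n) : ℝ))
  | incl {d e : ℕ} (hed : e < d) {f : ℤ → ℝ} (hf : GP e f) : GP d f
  | ceil {d : ℕ} {f : ℤ → ℝ} (hf : GP d f) : GP d (fun n => (nearInt (f n) : ℝ))
  | smul {d : ℕ} (c : ℝ) {f : ℤ → ℝ} (hf : GP d f) : GP d (fun n => c * f n)
  | add {d : ℕ} {f g : ℤ → ℝ} (hf : GP d f) (hg : GP d g) : GP d (fun n => f n + g n)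

/-- The bracket expression `L(a₁, …, a_ℓ) = a₁⌈L(a₂, …, a_ℓ)⌉`, `L(a) = a`. -/
def Lfun : List ℝ → ℝ
  | [] => 0
  | [a] => a
  | a :: b :: rest => a * (nearInt (Lfun (b :: rest)) : ℝ)

/-- Special generalized polynomials of degree at most `d`:
the functions `n ↦ L(n^{j₁} a₁, …, n^{j_ℓ} a_ℓ)` with `1 ≤ ℓ`, `j t ≥ 1`, `∑ j t ≤ d`. -/
def SGP (d : ℕ) (g : ℤ → ℝ) : Prop :=
  ∃ ℓ : ℕ, 1 ≤ ℓ ∧ ∃ (a : Fin ℓ → ℝ) (j : Fin ℓ → ℕ),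
    (∀ t, 1 ≤ j t) ∧ (∑ t, j t) ≤ d ∧
    g = fun n : ℤ => Lfun (List.ofFn fun t => (n : ℝ) ^ (j t) * a t)

/-- `FS({n i}) = {n_{i₁} + ⋯ + n_{i_k} : i₁ < ⋯ < i_k}`, the set of finite sums. -/
def FS {d : ℕ} (n : Fin d → ℤ) : Set ℤ :=
  { m | ∃ I : Finset (Fin d), I.Nonempty ∧ m = ∑ i ∈ I, n i }

/-- `SG d P`: sums `p_{i₁} + ⋯ + p_{i_k}` over strictly increasing finite index
sequences whose consecutive gaps are at most `d` (infinite sequence `P`). -/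
def SG (d : ℕ) (P : ℕ → ℤ) : Set ℤ :=
  { n | ∃ k : ℕ, ∃ i : Fin (k + 1) → ℕ, StrictMono i ∧
      (∀ t : Fin k, i t.succ - i t.castSucc ≤ d) ∧ n = ∑ t, P (i t) }

/-- `SGfin d P` : the same for a finite sequence `P` of length `m`. -/
def SGfin (d : ℕ) {m : ℕ} (P : Fin m → ℤ) : Set ℤ :=
  { n | ∃ k : ℕ, ∃ i : Fin (k + 1) → Fin m, StrictMono i ∧
      (∀ t : Fin k, (i t.succ : ℕ) - (i t.castSucc : ℕ) ≤ d) ∧ n = ∑ t, P (i t) }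

/-- A set of integers is syndetic if it has bounded gaps. -/
def Syndetic (A : Set ℤ) : Prop :=
  ∃ N : ℕ, ∀ i : ℤ, ∃ j, i ≤ j ∧ j ≤ i + N ∧ j ∈ A

/-- `F` has positive upper Banach density. -/
def PosUpperBanachDensity (F : Set ℤ) : Prop :=
  ∃ δ : ℝ, 0 < δ ∧ ∀ N : ℕ, ∃ (a : ℤ) (L : ℕ), N ≤ L ∧ 1 ≤ L ∧
    δ * L ≤ ((Finset.Icc a (a + L - 1)).filter (fun x => x ∈ F)).card

/-- A set `A ⊆ ℤ` contains finite IP-sets of arbitrarily long lengths. -/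
def ContainsArbLongFIP (A : Set ℤ) : Prop :=
  ∀ k : ℕ, 1 ≤ k → ∃ p : Fin k → ℤ, FS p ⊆ A

/-- A topological dynamical system `(X, T)` is minimal: every orbit is dense. -/
def MinimalTDS {X : Type*} [TopologicalSpace X] (T : X ≃ₜ X) : Prop :=
  ∀ x : X, Dense (Set.range fun n : ℤ => hIter T n x)

/-- `Nset T x U = N(x, U) = {n ∈ ℤ : Tⁿ x ∈ U}`. -/
def Nset {X : Type*} [TopologicalSpace X] (T : X ≃ₜ X) (x : X) (U : Set X) : Set ℤ :=
  { n : ℤ | hIter T n x ∈ U }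

/-- The regionally proximal relation of order `d`. -/
def RPd {X : Type*} [MetricSpace X] (T : X ≃ₜ X) (d : ℕ) (x y : X) : Prop :=
  ∀ δ : ℝ, 0 < δ → ∃ (x' y' : X) (n : Fin d → ℤ),
    dist x x' < δ ∧ dist y y' < δ ∧
    ∀ ε : Finset (Fin d), ε.Nonempty →
      dist (hIter T (∑ i ∈ ε, n i) x') (hIter T (∑ i ∈ ε, n i) y') < δ

/-- `S` is a set of `d`-topological recurrence. -/
def TopRecSet (d : ℕ) (S : Set ℤ) : Prop :=
  ∀ (X : Type) [MetricSpace X] [CompactSpace X] (T : X ≃ₜ X), MinimalTDS T →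
    ∀ U : Set X, IsOpen U → U.Nonempty →
      ∃ n ∈ S, (⋂ j ∈ Finset.range (d + 1), hIter T ((j : ℤ) * n) ⁻¹' U).Nonempty

/-- `S` is a set of `d`-recurrence (measurable recurrence). -/
def MeasRecSet (d : ℕ) (S : Set ℤ) : Prop :=
  ∀ (Y : Type) [MeasurableSpace Y] [StandardBorelSpace Y]
    (μ : Measure Y) [IsProbabilityMeasure μ] (T : Y ≃ᵐ Y),
    MeasurePreserving (⇑T) μ μ →
    ∀ A : Set Y, MeasurableSet A → 0 < μ A →
      ∃ n ∈ S, 0 < μ (⋂ j ∈ Finset.range (d + 1), zIter T.toEquiv ((j : ℤ) * n) ⁻¹' A)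

/-- `P` is a Birkhoff recurrence set of order `d`. -/
def BirkhoffRecSet (d : ℕ) (P : Set ℤ) : Prop :=
  ∀ (X : Type) [MetricSpace X] [CompactSpace X] (T : X ≃ₜ X), MinimalTDS T →
    ∀ U : Set X, IsOpen U → U.Nonempty →
      ∃ n : Fin d → ℤ, FS n ⊆ P ∧ (U ∩ ⋂ m ∈ FS n, hIter T m ⁻¹' U).Nonempty

/-- `F` is a Poincaré recurrence set of order `d`. -/
def PoincareRecSet (d : ℕ) (F : Set ℤ) : Prop :=
  ∀ (Y : Type) [MeasurableSpace Y] [StandardBorelSpace Y]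
    (μ : Measure Y) [IsProbabilityMeasure μ] (T : Y ≃ᵐ Y),
    MeasurePreserving (⇑T) μ μ →
    ∀ A : Set Y, MeasurableSet A → 0 < μ A →
      ∃ n : Fin d → ℤ, FS n ⊆ F ∧ 0 < μ (A ∩ ⋂ m ∈ FS n, zIter T.toEquiv m ⁻¹' A)

/-- The upper unitriangular matrix `M(a)` with entries `(M(a))_{i, i+k} = a i k`
(1-based indexing). -/
def Mmat (d : ℕ) (a : ℕ → ℕ → ℝ) : Matrix (Fin (d + 1)) (Fin (d + 1)) ℝ :=
  fun r c =>
    if (r : ℕ) = (c : ℕ) then 1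
    else if (r : ℕ) < (c : ℕ) then a ((r : ℕ) + 1) ((c : ℕ) - (r : ℕ)) else 0

/-- `P_ℓ(a; i, k) = ∑ a_i^{s₁} a_{i+s₁}^{s₂} ⋯`, sum over `(s₁,…,s_ℓ) ∈ {1,…,k}^ℓ`
with `s₁ + ⋯ + s_ℓ = k`. -/
def Ppoly (a : ℕ → ℕ → ℝ) (i k ℓ : ℕ) : ℝ :=
  ∑ s ∈ Finset.univ.filter (fun s : Fin ℓ → Fin k => (∑ t, ((s t : ℕ) + 1)) = k),
    ∏ t : Fin ℓ,
      a (i + ∑ u ∈ Finset.univ.filter (fun u : Fin ℓ => u < t), ((s u : ℕ) + 1))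
        ((s t : ℕ) + 1)

/-- The upper unitriangular matrix with superdiagonal `α₁, …, α_d` (1-based). -/
def Amat (d : ℕ) (α : ℕ → ℝ) : Matrix (Fin (d + 1)) (Fin (d + 1)) ℝ :=
  fun r c =>
    if (r : ℕ) = (c : ℕ) then 1
    else if (c : ℕ) = (r : ℕ) + 1 then α ((r : ℕ) + 1) else 0

end


section AuxStatement16

variable {X : Type*} [TopologicalSpace X] (T : X ≃ₜ X)

lemma hIter_add' (m n : ℤ) (x : X) : hIter T (m + n) x = hIter T m (hIter T n x) := by
  simp [hIter, zIter, zpow_add]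

lemma hIter_zero' (x : X) : hIter T 0 x = x := by simp [hIter, zIter]

lemma hIter_one' (x : X) : hIter T 1 x = T x := by simp [hIter, zIter]

lemma hIter_neg_one' (x : X) : hIter T (-1) x = T.symm x := by
  simp only [hIter, zIter, zpow_neg, zpow_one]
  rfl

lemma hIter_succ' (k : ℤ) (x : X) : hIter T (k + 1) x = T (hIter T k x) := by
  rw [add_comm, hIter_add', hIter_one']

lemma hIter_pred' (k : ℤ) (x : X) : hIter T (k - 1) x = T.symm (hIter T k x) := by
  rw [sub_eq_add_neg, add_comm, hIter_add', hIter_neg_one']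

lemma continuous_hIter' (n : ℤ) : Continuous (hIter T n) := by
  induction n using Int.induction_on with
  | zero =>
      have h : hIter T 0 = fun x : X => x := funext fun x => hIter_zero' T x
      rw [h]; exact continuous_id
  | succ k ih =>
      have h : hIter T (k + 1) = fun x => T (hIter T k x) := funext fun x => hIter_succ' T k x
      rw [h]; exact T.continuous.comp ih
  | pred k ih =>
      have h : hIter T (-k - 1) = fun x => T.symm (hIter T (-k) x) :=
        funext fun x => hIter_pred' T (-k) x
      rw [h]; exact T.symm.continuous.comp ih

/-- The shift homeomorphism on `ℤ → Bool`. -/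
def shiftH : (ℤ → Bool) ≃ₜ (ℤ → Bool) where
  toFun x n := x (n + 1)
  invFun x n := x (n - 1)
  left_inv x := funext fun n => by simp
  right_inv x := funext fun n => by simp
  continuous_toFun := continuous_pi fun n => continuous_apply (n + 1)
  continuous_invFun := continuous_pi fun n => continuous_apply (n - 1)

lemma shiftH_eval (m : ℤ) (x : ℤ → Bool) (i : ℤ) : hIter shiftH m x i = x (i + m) := by
  induction m using Int.induction_on generalizing i with
  | zero => rw [hIter_zero', add_zero]
  | succ k ih =>
      rw [hIter_succ']
      show hIter shiftH k x (i + 1) = x (i + (k + 1))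
      rw [ih]; ring_nf
  | pred k ih =>
      have h : (-(k : ℤ) - 1) = (-(k : ℤ)) - 1 := rfl
      rw [h, hIter_pred']
      show hIter shiftH (-(k:ℤ)) x (i - 1) = x (i + (-(k:ℤ) - 1))
      rw [ih]; ring_nf

lemma isOpen_eval (k : ℤ) : IsOpen {z : ℤ → Bool | z k = true} := by
  have h : {z : ℤ → Bool | z k = true} = (fun z : ℤ → Bool => z k) ⁻¹' {true} := rfl
  rw [h]; exact (isOpen_discrete _).preimage (continuous_apply k)

lemma isClosed_eval (k : ℤ) : IsClosed {z : ℤ → Bool | z k = true} := by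
  have h : {z : ℤ → Bool | z k = true} = (fun z : ℤ → Bool => z k) ⁻¹' {true} := rfl
  rw [h]; exact (isClosed_discrete _).preimage (continuous_apply k)

end AuxStatement16

/-- `P` is topologically intersective of order `d` iff it is a Birkhoff
recurrence set of order `d`. -/
theorem statement16 (d : ℕ) (hd : 1 ≤ d) (P : Set ℤ) :
    (∀ F : Set ℤ, Syndetic F →
        ∃ n : Fin d → ℤ, FS n ⊆ P ∧ ∃ a ∈ F, ∀ m ∈ FS n, a + m ∈ F)
      ↔ BirkhoffRecSet d P := by
  constructor
  · -- topological intersectivity implies Birkhoff recurrence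
    intro h X _ _ T hmin U hU hUne
    obtain ⟨x0, hx0⟩ := hUne
    have hcover : ∀ y : X, ∃ n : ℤ, hIter T n y ∈ U := by
      intro y
      rcases dense_iff_inter_open.mp (hmin y) U hU ⟨x0, hx0⟩ with ⟨z, hzU, ⟨n, rfl⟩⟩
      exact ⟨n, hzU⟩
    obtain ⟨t, ht⟩ := IsCompact.elim_finite_subcover (isCompact_univ (X := X))
      (fun n : ℤ => hIter T n ⁻¹' U) (fun n => hU.preimage (continuous_hIter' T n))
      (by intro y _; rcases hcover y with ⟨n, hn⟩; exact Set.mem_iUnion.2 ⟨n, hn⟩)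
    have htne : t.Nonempty := by
      rcases Set.mem_iUnion₂.1 (ht (Set.mem_univ x0)) with ⟨n, hnt, _⟩
      exact ⟨n, hnt⟩
    set M := t.min' htne with hM
    set F : Set ℤ := {n : ℤ | hIter T n x0 ∈ U} with hF
    have hsyn : Syndetic F := by
      refine ⟨(t.max' htne - M).toNat, fun i => ?_⟩
      rcases Set.mem_iUnion₂.1 (ht (Set.mem_univ (hIter T (i - M) x0))) with ⟨n, hnt, hn⟩
      refine ⟨n + (i - M), ?_, ?_, ?_⟩
      · have := t.min'_le n hnt; omega
      · have h1 := t.le_max' n hnt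
        have h2 := t.min'_le _ (t.max'_mem htne)
        omega
      · show hIter T (n + (i - M)) x0 ∈ U
        rw [hIter_add']; exact hn
    obtain ⟨n, hFS, a, haF, hall⟩ := h F hsyn
    refine ⟨n, hFS, ⟨hIter T a x0, haF, ?_⟩⟩
    refine Set.mem_iInter₂.2 fun m hm => ?_
    show hIter T m (hIter T a x0) ∈ U
    rw [← hIter_add']
    have : a + m ∈ F := hall m hm
    rwa [add_comm] at this
  · -- Birkhoff recurrence implies topological intersectivity
    intro hB F hFsyn
    obtain ⟨N, hN⟩ := hFsyn
    letI : MetricSpace (ℤ → Bool) := TopologicalSpace.metrizableSpaceMetric (ℤ → Bool)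
    set x₀ : ℤ → Bool := fun n => decide (n ∈ F) with hx₀
    set orb : Set (ℤ → Bool) := Set.range fun n : ℤ => hIter shiftH n x₀ with horbdef
    set Z : Set (ℤ → Bool) := closure orb with hZdef
    set S : Set (Set (ℤ → Bool)) :=
      {Y | Y ⊆ Z ∧ Y.Nonempty ∧ IsClosed Y ∧ ∀ m : ℤ, hIter shiftH m '' Y ⊆ Y} with hSdef
    have hZS : Z ∈ S := by
      refine ⟨subset_rfl, ⟨x₀, subset_closure ⟨0, hIter_zero' _ _⟩⟩, isClosed_closure, ?_⟩
      intro m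
      refine (image_closure_subset_closure_image (continuous_hIter' shiftH m)).trans
        (closure_mono ?_)
      rintro _ ⟨_, ⟨k, rfl⟩, rfl⟩
      exact ⟨m + k, by
        show hIter shiftH (m + k) x₀ = hIter shiftH m (hIter shiftH k x₀)
        exact hIter_add' shiftH m k x₀⟩
    have hchainLB : ∀ c ⊆ S, IsChain (· ⊆ ·) c → c.Nonempty →
        ∃ lb ∈ S, ∀ s ∈ c, lb ⊆ s := by
      intro c hcS hchain hcne
      haveI : Nonempty ↑c := hcne.to_subtype
      have hdir : DirectedOn (fun x1 x2 => x1 ⊇ x2) c := by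
        intro a ha b hb
        by_cases hab : a = b
        · exact ⟨a, ha, subset_rfl, by rw [hab]⟩
        · rcases hchain ha hb hab with h1 | h1
          · exact ⟨a, ha, subset_rfl, h1⟩
          · exact ⟨b, hb, h1, subset_rfl⟩
      refine ⟨⋂₀ c, ⟨?_, ?_, ?_, ?_⟩, fun s hs => Set.sInter_subset_of_mem hs⟩
      · obtain ⟨a, ha⟩ := hcne
        exact (Set.sInter_subset_of_mem ha).trans (hcS ha).1
      · exact IsCompact.nonempty_sInter_of_directed_nonempty_isCompact_isClosed hdir
          (fun UU hUU => (hcS hUU).2.1)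
          (fun UU hUU => (hcS hUU).2.2.1.isCompact)
          (fun UU hUU => (hcS hUU).2.2.1)
      · exact isClosed_sInter fun UU hUU => (hcS hUU).2.2.1
      · intro m
        rintro _ ⟨y, hy, rfl⟩
        refine Set.mem_sInter.2 fun UU hUU => ?_
        exact (hcS hUU).2.2.2 m ⟨y, Set.mem_sInter.1 hy UU hUU, rfl⟩
    obtain ⟨Y, hYZ, hYmin⟩ := zorn_superset_nonempty S hchainLB Z hZS
    obtain ⟨hYsubZ, hYne, hYclosed, hYinv⟩ := hYmin.1
    -- the subsystem
    haveI : CompactSpace ↥Y := isCompact_iff_compactSpace.mp hYclosed.isCompact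
    have hmem₁ : ∀ y ∈ Y, shiftH y ∈ Y := by
      intro y hy
      have := hYinv 1 ⟨y, hy, rfl⟩
      rwa [hIter_one'] at this
    have hmem₂ : ∀ y ∈ Y, shiftH.symm y ∈ Y := by
      intro y hy
      have := hYinv (-1) ⟨y, hy, rfl⟩
      rwa [hIter_neg_one'] at this
    let T' : ↥Y ≃ₜ ↥Y :=
      { toFun := fun y => ⟨shiftH y.1, hmem₁ y.1 y.2⟩
        invFun := fun y => ⟨shiftH.symm y.1, hmem₂ y.1 y.2⟩
        left_inv := fun y => Subtype.ext (shiftH.symm_apply_apply y.1)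
        right_inv := fun y => Subtype.ext (shiftH.apply_symm_apply y.1)
        continuous_toFun :=
          Continuous.subtype_mk (shiftH.continuous.comp continuous_subtype_val) _
        continuous_invFun :=
          Continuous.subtype_mk (shiftH.symm.continuous.comp continuous_subtype_val) _ }
    have hcoe : ∀ (n : ℤ) (y : ↥Y), (hIter T' n y).1 = hIter shiftH n y.1 := by
      intro n
      induction n using Int.induction_on with
      | zero => intro y; rw [hIter_zero', hIter_zero']
      | succ k ih =>
          intro y
          rw [hIter_succ', hIter_succ']
          show shiftH (hIter T' k y).1 = shiftH (hIter shiftH k y.1)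
          rw [ih y]
      | pred k ih =>
          intro y
          have h : (-(k : ℤ) - 1) = (-(k : ℤ)) - 1 := rfl
          rw [h, hIter_pred', hIter_pred']
          show shiftH.symm (hIter T' (-(k:ℤ)) y).1 = shiftH.symm (hIter shiftH (-(k:ℤ)) y.1)
          rw [ih y]
    have horbY : ∀ (y : ↥Y) (n : ℤ), hIter shiftH n y.1 ∈ Y := fun y n =>
      hYinv n ⟨y.1, y.2, rfl⟩
    have hmin' : MinimalTDS T' := by
      intro y
      rw [dense_iff_inter_open]
      intro V hV hVne
      rcases isOpen_induced_iff.mp hV with ⟨O, hO, rfl⟩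
      obtain ⟨z, hzV⟩ := hVne
      -- the orbit closure of y.1 equals Y by minimality
      have hWS : closure (Set.range fun n : ℤ => hIter shiftH n y.1) ∈ S := by
        refine ⟨?_, ⟨y.1, subset_closure ⟨0, hIter_zero' _ _⟩⟩, isClosed_closure, ?_⟩
        · exact (closure_minimal (by rintro _ ⟨n, rfl⟩; exact horbY y n) hYclosed).trans hYsubZ
        · intro m
          refine (image_closure_subset_closure_image (continuous_hIter' shiftH m)).trans
            (closure_mono ?_)
          rintro _ ⟨_, ⟨k, rfl⟩, rfl⟩
          exact ⟨m + k, by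
            show hIter shiftH (m + k) y.1 = hIter shiftH m (hIter shiftH k y.1)
            exact hIter_add' shiftH m k y.1⟩
      have hWY : closure (Set.range fun n : ℤ => hIter shiftH n y.1) ⊆ Y :=
        closure_minimal (by rintro _ ⟨n, rfl⟩; exact horbY y n) hYclosed
      have hYW : Y ⊆ closure (Set.range fun n : ℤ => hIter shiftH n y.1) :=
        hYmin.2 hWS hWY
      have hz1 : z.1 ∈ closure (Set.range fun n : ℤ => hIter shiftH n y.1) := hYW z.2
      rcases mem_closure_iff.1 hz1 O hO hzV with ⟨_, hwO, ⟨n, rfl⟩⟩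
      refine ⟨hIter T' n y, ?_, ⟨n, rfl⟩⟩
      show (hIter T' n y).1 ∈ O
      rw [hcoe]; exact hwO
    -- the open set U
    set U : Set ↥Y := {z : ↥Y | z.1 0 = true} with hUdef
    have hUopen : IsOpen U := by
      have h : U = (fun z : ↥Y => z.1) ⁻¹' {z : ℤ → Bool | z 0 = true} := rfl
      rw [h]; exact (isOpen_eval 0).preimage continuous_subtype_val
    have hZwin : ∀ z ∈ Z, ∃ j : ℤ, 0 ≤ j ∧ j ≤ (N : ℤ) ∧ z j = true := by
      have hclosed : IsClosed {z : ℤ → Bool | ∃ j : ℤ, 0 ≤ j ∧ j ≤ (N : ℤ) ∧ z j = true} := by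
        have h : {z : ℤ → Bool | ∃ j : ℤ, 0 ≤ j ∧ j ≤ (N : ℤ) ∧ z j = true} =
            ⋃ j ∈ Finset.Icc (0 : ℤ) N, {z : ℤ → Bool | z j = true} := by
          ext z
          simp only [Set.mem_setOf_eq, Set.mem_iUnion, Finset.mem_Icc]
          constructor
          · rintro ⟨j, h1, h2, h3⟩; exact ⟨j, ⟨h1, h2⟩, h3⟩
          · rintro ⟨j, ⟨h1, h2⟩, h3⟩; exact ⟨j, h1, h2, h3⟩
        rw [h]
        exact Set.Finite.isClosed_biUnion (Finset.finite_toSet _) fun j _ => isClosed_eval j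
      have horb : orb ⊆ {z : ℤ → Bool | ∃ j : ℤ, 0 ≤ j ∧ j ≤ (N : ℤ) ∧ z j = true} := by
        rintro _ ⟨m, rfl⟩
        obtain ⟨j, h1, h2, h3⟩ := hN m
        refine ⟨j - m, by omega, by omega, ?_⟩
        show hIter shiftH m x₀ (j - m) = true
        rw [shiftH_eval, sub_add_cancel, hx₀]
        exact decide_eq_true h3
      exact fun z hz => closure_minimal horb hclosed hz
    have hUne : U.Nonempty := by
      obtain ⟨y0, hy0⟩ := hYne
      obtain ⟨j, h1, h2, h3⟩ := hZwin y0 (hYsubZ hy0)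
      refine ⟨hIter T' j ⟨y0, hy0⟩, ?_⟩
      show (hIter T' j ⟨y0, hy0⟩).1 0 = true
      rw [hcoe, shiftH_eval, zero_add]
      exact h3
    obtain ⟨n, hFSP, w, hwU, hwI⟩ := hB ↥Y T' hmin' U hUopen hUne
    have hwm : ∀ m ∈ FS n, w.1 m = true := by
      intro m hm
      have := Set.mem_iInter₂.1 hwI m hm
      have h1 : (hIter T' m w).1 0 = true := this
      rwa [hcoe, shiftH_eval, zero_add] at h1
    -- transfer back to F via the orbit closure
    set G : Set (ℤ → Bool) :=
      {z | z 0 = true} ∩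
        ⋂ I : Finset (Fin d), {z : ℤ → Bool | I.Nonempty → z (∑ i ∈ I, n i) = true} with hGdef
    have hGopen : IsOpen G := by
      refine (isOpen_eval 0).inter (isOpen_iInter_of_finite fun I => ?_)
      by_cases hI : I.Nonempty
      · have h : {z : ℤ → Bool | I.Nonempty → z (∑ i ∈ I, n i) = true} =
            {z : ℤ → Bool | z (∑ i ∈ I, n i) = true} := by
          ext z; simp [hI]
        rw [h]; exact isOpen_eval _
      · have h : {z : ℤ → Bool | I.Nonempty → z (∑ i ∈ I, n i) = true} = Set.univ := by
          ext z; simp [hI]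
        rw [h]; exact isOpen_univ
    have hwG : w.1 ∈ G := by
      refine ⟨hwU, Set.mem_iInter.2 fun I => fun hI => ?_⟩
      exact hwm _ ⟨I, hI, rfl⟩
    have hwZ : w.1 ∈ Z := hYsubZ w.2
    rcases mem_closure_iff.1 hwZ G hGopen hwG with ⟨_, hGmem, ⟨a, rfl⟩⟩
    obtain ⟨ha0, haI⟩ := hGmem
    have haF : a ∈ F := by
      have h1 : hIter shiftH a x₀ 0 = true := ha0
      rw [shiftH_eval, zero_add, hx₀] at h1
      exact of_decide_eq_true h1
    refine ⟨n, hFSP, a, haF, ?_⟩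
    rintro m ⟨I, hI, rfl⟩
    have h1 : hIter shiftH a x₀ (∑ i ∈ I, n i) = true := Set.mem_iInter.1 haI I hI
    rw [shiftH_eval, hx₀] at h1
    have h2 : (∑ i ∈ I, n i) + a ∈ F := of_decide_eq_true h1
    rwa [add_comm]
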